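/- There exist an irrational number θ and a strictly increasing sequence of positive integers (n_k)_{k≥1} such that n_k ≥ 2^k and 0 < n_kθ − ⌊n_kθ⌋ ≤ 2^{−n_k} for every k ≥ 1. -/

import Mathlib

namespace RapidApprox

def a : ℕ → ℕ
  | 0 => 1
  | k + 1 => a k + 2 ^ (a k) + 1

lemma a_ge (k : ℕ) : k + 1 ≤ a k := by
  induction k with
  | zero => simp [a]
  | succ n ih =>
    have h : 0 < 2 ^ a n := Nat.pow_pos (by norm_num)
    simp only [a]; omega

lemma a_lt_succ (k : ℕ) : a k < a (k + 1) := by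
  have h : 0 < 2 ^ a k := Nat.pow_pos (by norm_num)
  simp only [a]; omega

lemma a_mono : StrictMono a := strictMono_nat_of_lt_succ a_lt_succ

lemma a_add_le (k i : ℕ) : a k + i ≤ a (i + k) := by
  induction i with
  | zero => simp
  | succ n ih =>
    have h := a_lt_succ (n + k)
    rw [show n + 1 + k = n + k + 1 by omega]
    omega

noncomputable def f (i : ℕ) : ℝ := (2:ℝ)⁻¹ ^ a i

lemma f_pos (i : ℕ) : 0 < f i := by unfold f; positivity

lemma f_le (i : ℕ) : f i ≤ (2:ℝ)⁻¹ ^ i := by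
  apply pow_le_pow_of_le_one (by norm_num) (by norm_num)
  have := a_ge i; omega

lemma summable_f : Summable f := by
  apply Summable.of_nonneg_of_le (fun i => (f_pos i).le) f_le
  exact summable_geometric_of_lt_one (by norm_num) (by norm_num)

noncomputable def θ : ℝ := ∑' i, f i

lemma summable_tail (k : ℕ) : Summable (fun i => f (i + k)) :=
  (summable_nat_add_iff k).mpr summable_f

lemma tail_pos (k : ℕ) : 0 < ∑' i, f (i + k) :=
  Summable.tsum_pos (summable_tail k) (fun i => (f_pos _).le) 0 (f_pos _)

lemma tail_le (k : ℕ) : ∑' i, f (i + k) ≤ 2 * (2:ℝ)⁻¹ ^ a k := by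
  have h1 : ∀ i, f (i + k) ≤ (2:ℝ)⁻¹ ^ a k * (2:ℝ)⁻¹ ^ i := by
    intro i
    rw [← pow_add]
    apply pow_le_pow_of_le_one (by norm_num) (by norm_num)
    exact a_add_le k i
  calc ∑' i, f (i + k) ≤ ∑' i : ℕ, (2:ℝ)⁻¹ ^ a k * (2:ℝ)⁻¹ ^ i := by
        apply Summable.tsum_le_tsum h1 (summable_tail k)
        exact (summable_geometric_of_lt_one (by norm_num) (by norm_num)).mul_left _
    _ = (2:ℝ)⁻¹ ^ a k * (1 - 2⁻¹)⁻¹ := by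
        rw [tsum_mul_left, tsum_geometric_of_lt_one (by norm_num) (by norm_num)]
    _ = 2 * (2:ℝ)⁻¹ ^ a k := by norm_num [mul_comm]

lemma theta_split (k : ℕ) :
    θ = (∑ i ∈ Finset.range k, f i) + ∑' i, f (i + k) :=
  (Summable.sum_add_tsum_nat_add k summable_f).symm

lemma int_part (k : ℕ) :
    (2:ℝ) ^ a k * (∑ i ∈ Finset.range (k+1), f i)
      = ((∑ i ∈ Finset.range (k+1), 2 ^ (a k - a i) : ℕ) : ℝ) := by
  push_cast
  rw [Finset.mul_sum]
  apply Finset.sum_congr rfl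
  intro i hi
  have hle : a i ≤ a k := a_mono.monotone (Nat.lt_succ_iff.mp (Finset.mem_range.mp hi))
  have hsum : a k - a i + a i = a k := Nat.sub_add_cancel hle
  unfold f
  rw [show (2:ℝ) ^ a k = 2 ^ (a k - a i) * 2 ^ a i by rw [← pow_add, hsum],
    mul_assoc, ← mul_pow]
  norm_num

lemma x_pos (k : ℕ) : 0 < (2:ℝ) ^ a k * ∑' i, f (i + (k+1)) :=
  mul_pos (pow_pos two_pos _) (tail_pos _)

lemma x_le (k : ℕ) :
    (2:ℝ) ^ a k * ∑' i, f (i + (k+1)) ≤ ((2:ℝ) ^ 2 ^ a k)⁻¹ := by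
  have h1 : (2:ℝ) ^ a k * ∑' i, f (i + (k+1)) ≤ (2:ℝ) ^ a k * (2 * (2:ℝ)⁻¹ ^ a (k+1)) :=
    mul_le_mul_of_nonneg_left (tail_le _) (by positivity)
  refine h1.trans_eq ?_
  have ha : a (k+1) = a k + 2 ^ a k + 1 := rfl
  have h2 : (2:ℝ) ^ a k * (2:ℝ)⁻¹ ^ a k = 1 := by rw [← mul_pow]; norm_num
  rw [ha, pow_add, pow_add, pow_one]
  calc (2:ℝ) ^ a k * (2 * ((2:ℝ)⁻¹ ^ a k * (2:ℝ)⁻¹ ^ 2 ^ a k * 2⁻¹))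
      = ((2:ℝ) ^ a k * (2:ℝ)⁻¹ ^ a k) * (2:ℝ)⁻¹ ^ 2 ^ a k * (2 * 2⁻¹) := by ring
    _ = ((2:ℝ) ^ 2 ^ a k)⁻¹ := by rw [h2, inv_pow]; norm_num

lemma x_lt_one (k : ℕ) : (2:ℝ) ^ a k * ∑' i, f (i + (k+1)) < 1 := by
  refine (x_le k).trans_lt ?_
  rw [inv_lt_one_iff₀]
  right
  exact one_lt_pow₀ one_lt_two (Nat.pow_pos (by norm_num)).ne'

lemma fract_eq (k : ℕ) :
    Int.fract ((2:ℝ) ^ a k * θ) = (2:ℝ) ^ a k * ∑' i, f (i + (k+1)) := by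
  rw [theta_split (k+1), mul_add, int_part]
  rw [show ((∑ i ∈ Finset.range (k+1), 2 ^ (a k - a i) : ℕ) : ℝ)
      = (((∑ i ∈ Finset.range (k+1), 2 ^ (a k - a i) : ℕ) : ℤ) : ℝ) by push_cast; ring,
    Int.fract_intCast_add]
  exact Int.fract_eq_self.mpr ⟨(x_pos k).le, x_lt_one k⟩

lemma theta_irrational : Irrational θ := by
  rintro ⟨r, hr⟩
  set k := r.den with hk
  have hq : 0 < r.den := r.pos
  set y := (2:ℝ) ^ a k * θ with hy
  set x := (2:ℝ) ^ a k * ∑' i, f (i + (k+1)) with hx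
  have hfr : Int.fract y = x := fract_eq k
  have hden : (r.den : ℝ) * θ = (r.num : ℝ) := by
    rw [← hr, show ((r.den:ℝ)) * (r:ℝ) = ((r * (r.den:ℚ) : ℚ) : ℝ) by push_cast; ring,
      Rat.mul_den_eq_num]
    norm_cast
  set z : ℤ := 2 ^ a k * r.num - r.den * ⌊y⌋ with hz
  have hqy : (r.den : ℝ) * y = 2 ^ a k * (r.num : ℝ) := by
    rw [hy, show (r.den:ℝ) * ((2:ℝ) ^ a k * θ) = (2:ℝ) ^ a k * ((r.den:ℝ) * θ) by ring, hden]
  have hzx : (z : ℝ) = r.den * x := by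
    rw [← hfr, Int.fract, mul_sub, hqy]
    push_cast [hz]
    ring
  have hzpos : (0:ℝ) < z := by
    rw [hzx]
    exact mul_pos (by exact_mod_cast hq) (x_pos k)
  have hz0 : (0:ℤ) < z := by exact_mod_cast hzpos
  have hz1 : (1:ℝ) ≤ z := by exact_mod_cast hz0
  have hlt : (r.den : ℝ) * x < 1 := by
    have hub : (r.den : ℝ) * x ≤ (r.den : ℝ) * ((2:ℝ) ^ 2 ^ a k)⁻¹ :=
      mul_le_mul_of_nonneg_left (x_le k) (by positivity)
    refine hub.trans_lt ?_
    rw [← div_eq_mul_inv, div_lt_one (by positivity)]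
    have hnat : r.den < 2 ^ 2 ^ a k := by
      calc r.den < 2 ^ r.den := Nat.lt_two_pow_self
        _ ≤ 2 ^ 2 ^ a k := by
            apply Nat.pow_le_pow_right (by norm_num)
            have h1 := a_ge k
            have h2 := Nat.lt_two_pow_self (n := a k)
            omega
    exact_mod_cast hnat
  rw [hzx] at hz1
  linarith

theorem main :
    ∃ θ : ℝ, Irrational θ ∧ ∃ n : ℕ → ℕ,
      (∀ k : ℕ, 1 ≤ k → n k < n (k + 1)) ∧
      (∀ k : ℕ, 1 ≤ k → 2 ^ k ≤ n k ∧
        0 < Int.fract ((n k : ℝ) * θ) ∧ Int.fract ((n k : ℝ) * θ) ≤ ((2 : ℝ) ^ n k)⁻¹) := by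
  refine ⟨θ, theta_irrational, fun k => 2 ^ a k, fun k _ => ?_, fun k _ => ?_⟩
  · exact Nat.pow_lt_pow_right one_lt_two (a_lt_succ k)
  · refine ⟨Nat.pow_le_pow_right (by norm_num) (by have := a_ge k; omega), ?_, ?_⟩
    · rw [show ((2 ^ a k : ℕ) : ℝ) = (2:ℝ) ^ a k by push_cast; ring, fract_eq]
      exact x_pos k
    · rw [show ((2 ^ a k : ℕ) : ℝ) = (2:ℝ) ^ a k by push_cast; ring, fract_eq]
      refine (x_le k).trans_eq ?_
      norm_num

end RapidApprox

theorem exists_irrational_with_rapidly_approximating_sequence :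
    ∃ θ : ℝ, Irrational θ ∧ ∃ n : ℕ → ℕ,
      (∀ k : ℕ, 1 ≤ k → n k < n (k + 1)) ∧
      (∀ k : ℕ, 1 ≤ k → 2 ^ k ≤ n k ∧
        0 < Int.fract ((n k : ℝ) * θ) ∧ Int.fract ((n k : ℝ) * θ) ≤ ((2 : ℝ) ^ n k)⁻¹) := by
  exact RapidApprox.main
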